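/- Let G be a finite simple graph with an OCDC 𝒞. If the girth of G is strictly greater than the average degree of G, then 𝒞 consists of at most |V(G)| − 1 directed cycles, i.e., 𝒞 is an SOCDC of G. -/

import Mathlib

open SimpleGraph

/-- The list of arcs of a cyclically-read list of vertices:
`[(l₀,l₁), (l₁,l₂), …, (lₙ₋₁,l₀)]`. -/
def cycleArcs {V : Type*} (l : List V) : List (V × V) := l.zip (l.rotate 1)

/-- `l` represents a directed cycle of the symmetric orientation of `G`:
a cyclic sequence of at least three pairwise distinct vertices with consecutive
vertices adjacent (cyclically). -/
def IsDirCycle {V : Type*} (G : SimpleGraph V) (l : List V) : Prop :=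
  3 ≤ l.length ∧ l.Nodup ∧ ∀ p ∈ cycleArcs l, G.Adj p.1 p.2

/-- An oriented cycle double cover of `G` : a collection of directed cycles of the
symmetric orientation of `G` such that each arc `(u,v)` (with `u ~ v` in `G`) lies
in exactly one of the cycles. -/
def IsOCDC {V : Type*} (G : SimpleGraph V) (C : Finset (List V)) : Prop :=
  (∀ l ∈ C, IsDirCycle G l) ∧
    ∀ u v : V, G.Adj u v → ∃! l : List V, l ∈ C ∧ (u, v) ∈ cycleArcs l

/-- `G` (a graph with vertex set of size `n`) has a small oriented cycle double cover:
an OCDC with at most `n - 1` directed cycles. -/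
def HasSOCDC {V : Type*} (G : SimpleGraph V) : Prop :=
  ∃ C : Finset (List V), IsOCDC G C ∧ C.card ≤ Nat.card V - 1

/-- `l` represents a directed path of the symmetric orientation of `G`. -/
def IsDirPath {V : Type*} (G : SimpleGraph V) (l : List V) : Prop :=
  l ≠ [] ∧ l.Nodup ∧ l.Chain' G.Adj

/-- An oriented perfect path double cover of `G`: a collection of directed paths of the
symmetric orientation of `G` such that each arc lies in exactly one path, and every
vertex occurs exactly once as the start and exactly once as the end of a path. -/
def IsOPPDC {V : Type*} (G : SimpleGraph V) (P : Finset (List V)) : Prop :=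
  (∀ l ∈ P, IsDirPath G l) ∧
    (∀ u v : V, G.Adj u v → ∃! l : List V, l ∈ P ∧ (u, v) ∈ l.zip l.tail) ∧
    (∀ v : V, ∃! l : List V, l ∈ P ∧ l.head? = some v) ∧
    (∀ v : V, ∃! l : List V, l ∈ P ∧ l.getLast? = some v)


namespace OCDCAux

variable {V : Type} (G : SimpleGraph V)

def mkWalk : (t : List V) → (x b : V) →
    (∀ p ∈ (x :: t).zip (t ++ [b]), G.Adj p.1 p.2) → G.Walk x b
  | [], x, b, h => SimpleGraph.Walk.cons (h (x, b) (by simp)) SimpleGraph.Walk.nil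
  | y :: t, x, b, h =>
    SimpleGraph.Walk.cons (h (x, y) (by simp))
      (mkWalk t y b (fun p hp => h p (by
        rw [List.cons_append, List.zip_cons_cons]
        exact List.mem_cons_of_mem _ hp)))

lemma mkWalk_support : ∀ (t : List V) (x b : V) h,
    (mkWalk G t x b h).support = x :: (t ++ [b])
  | [], x, b, h => by simp [mkWalk]
  | y :: t, x, b, h => by simp [mkWalk, mkWalk_support]

lemma mkWalk_length : ∀ (t : List V) (x b : V) h,
    (mkWalk G t x b h).length = t.length + 1
  | [], x, b, h => by simp [mkWalk]
  | y :: t, x, b, h => by simp [mkWalk, mkWalk_length]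

lemma mkWalk_edges_notmem : ∀ (t : List V) (x a c : V) h, a ∉ t → c ∉ t → x ≠ a →
    (t ≠ [] ∨ x ≠ c) → s(a, c) ∉ (mkWalk G t x a h).edges
  | [], x, a, c, h, ha, hc, hxa, hd => by
    simp only [mkWalk, SimpleGraph.Walk.edges_cons, SimpleGraph.Walk.edges_nil,
      List.mem_singleton]
    intro he
    rcases Sym2.eq_iff.mp he with ⟨h1, _⟩ | ⟨_, h2⟩
    · exact hxa h1.symm
    · exact (hd.resolve_left (by simp)) h2.symm
  | y :: t, x, a, c, h, ha, hc, hxa, hd => by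
    simp only [mkWalk, SimpleGraph.Walk.edges_cons, List.mem_cons]
    rintro (he | he)
    · rcases Sym2.eq_iff.mp he with ⟨h1, _⟩ | ⟨h1, _⟩
      · exact hxa h1.symm
      · exact ha (h1 ▸ List.mem_cons_self)
    · exact mkWalk_edges_notmem t y a c _ (fun hm => ha (List.mem_cons_of_mem _ hm))
        (fun hm => hc (List.mem_cons_of_mem _ hm))
        (fun hya => ha (hya ▸ List.mem_cons_self))
        (Or.inr (fun hyc => hc (hyc ▸ List.mem_cons_self))) he

lemma egirth_le_of_isDirCycle {l : List V} (hl : IsDirCycle G l) :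
    G.egirth ≤ (l.length : ℕ∞) := by
  obtain ⟨hlen, hnd, harc⟩ := hl
  obtain ⟨a, c, t, rfl⟩ : ∃ a c t, l = a :: c :: t := by
    match l, hlen with
    | a :: c :: t, _ => exact ⟨a, c, t, rfl⟩
  have haC : a ∉ c :: t := (List.nodup_cons.mp hnd).1
  have hnd2 : (c :: t).Nodup := (List.nodup_cons.mp hnd).2
  have hct : c ∉ t := (List.nodup_cons.mp hnd2).1
  have hat : a ∉ t := fun h => haC (List.mem_cons_of_mem _ h)
  have hac : a ≠ c := fun h => haC (h ▸ List.mem_cons_self)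
  have harc' : ∀ p ∈ (a :: (c :: t)).zip ((c :: t) ++ [a]), G.Adj p.1 p.2 := by
    intro p hp
    apply harc
    unfold cycleArcs
    rwa [List.rotate_cons_succ, List.rotate_zero]
  have ht : t ≠ [] := by rintro rfl; simp at hlen
  have hw : (mkWalk G (c :: t) a a harc').IsCycle := by
    show (SimpleGraph.Walk.cons _ (mkWalk G t c a _)).IsCycle
    rw [SimpleGraph.Walk.cons_isCycle_iff]
    constructor
    · rw [SimpleGraph.Walk.isPath_def, mkWalk_support]
      rw [show c :: (t ++ [a]) = (c :: t) ++ [a] by simp, List.nodup_append_comm]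
      exact hnd
    · exact mkWalk_edges_notmem G t c a c _ hat hct (Ne.symm hac) (Or.inl ht)
  calc G.egirth ≤ ((mkWalk G (c :: t) a a harc').length : ℕ∞) :=
        (iInf_le _ a).trans ((iInf_le _ (mkWalk G (c :: t) a a harc')).trans (iInf_le _ hw))
    _ = _ := by rw [mkWalk_length]; norm_cast

lemma cycleArcs_nodup {l : List V} (h : l.Nodup) : (cycleArcs l).Nodup := by
  have hm : (cycleArcs l).map Prod.fst = l :=
    List.map_fst_zip (by simp)
  rw [← hm] at h
  exact h.of_map _

lemma cycleArcs_length (l : List V) : (cycleArcs l).length = l.length := by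
  simp [cycleArcs]

end OCDCAux

/-- If `G` has an OCDC `C` and the girth of `G` is strictly greater than the average
degree `2|E(G)|/|V(G)|` of `G`, then `C` has at most `|V(G)| - 1` cycles, i.e. `C` is
an SOCDC of `G`. -/
theorem isSOCDC_of_girth_gt_averageDegree {V : Type} [Finite V] (G : SimpleGraph V)
    (C : Finset (List V)) (hC : IsOCDC G C)
    (hgirth : (2 * Nat.card G.edgeSet : ℕ∞) < (Nat.card V : ℕ∞) * G.egirth) :
    C.card ≤ Nat.card V - 1 := by
  classical
  have : Fintype V := Fintype.ofFinite V
  rcases C.eq_empty_or_nonempty with rfl | ⟨l₀, hl₀⟩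
  · simp
  -- egirth is finite
  have hg : ∀ l ∈ C, G.egirth ≤ (l.length : ℕ∞) := fun l hl =>
    OCDCAux.egirth_le_of_isDirCycle G (hC.1 l hl)
  obtain ⟨k, hk⟩ : ∃ k : ℕ, G.egirth = (k : ℕ∞) := by
    have h1 : G.egirth ≠ ⊤ := fun h => by
      have := hg l₀ hl₀
      rw [h, top_le_iff] at this
      exact (WithTop.natCast_ne_top _) this
    obtain ⟨k, hk⟩ := WithTop.ne_top_iff_exists.mp h1
    exact ⟨k, hk.symm⟩
  -- the arc count
  have key : ∀ d : G.Dart, ∃! l, l ∈ C ∧ d.toProd ∈ cycleArcs l := by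
    intro d
    have := hC.2 d.toProd.1 d.toProd.2 d.adj
    simpa using this
  set φ : G.Dart → List V := fun d => (key d).exists.choose with hφdef
  have hφ : ∀ d, φ d ∈ C ∧ d.toProd ∈ cycleArcs (φ d) := fun d => (key d).exists.choose_spec
  have hcount : Fintype.card G.Dart = ∑ l ∈ C, l.length := by
    rw [← Finset.card_univ, Finset.card_eq_sum_card_fiberwise (f := φ) (t := C)
      (fun d _ => (hφ d).1)]
    refine Finset.sum_congr rfl fun l hl => ?_
    have hfib : Finset.univ.filter (fun d => φ d = l)
        = Finset.univ.filter (fun d : G.Dart => d.toProd ∈ cycleArcs l) := by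
      ext d
      simp only [Finset.mem_filter, Finset.mem_univ, true_and]
      constructor
      · rintro rfl; exact (hφ d).2
      · intro h; exact (key d).unique ⟨(hφ d).1, (hφ d).2⟩ ⟨hl, h⟩
    rw [hfib, ← OCDCAux.cycleArcs_length l,
      ← List.toFinset_card_of_nodup (OCDCAux.cycleArcs_nodup (hC.1 l hl).2.1)]
    refine Finset.card_bij' (fun d _ => d.toProd)
      (fun p hp => ⟨p, (hC.1 l hl).2.2 p (by simpa using hp)⟩) ?_ ?_ ?_ ?_
    · intro d hd
      simp only [Finset.mem_filter, Finset.mem_univ, true_and] at hd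
      simpa using hd
    · intro p hp
      simp only [Finset.mem_filter, Finset.mem_univ, true_and]
      simpa using hp
    · intro d hd
      rfl
    · intro p hp
      rfl
  -- now the arithmetic
  have hkl : ∀ l ∈ C, k ≤ l.length := by
    intro l hl
    have := hg l hl
    rw [hk] at this
    exact_mod_cast this
  have hE : 2 * Nat.card G.edgeSet = ∑ l ∈ C, l.length := by
    rw [← hcount, Nat.card_eq_fintype_card, ← SimpleGraph.edgeFinset_card,
      SimpleGraph.dart_card_eq_twice_card_edges]
  have hlt : 2 * Nat.card G.edgeSet < Nat.card V * k := by
    rw [hk] at hgirth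
    exact_mod_cast hgirth
  have hsum : C.card * k ≤ 2 * Nat.card G.edgeSet := by
    rw [hE]
    calc C.card * k = ∑ _l ∈ C, k := by rw [Finset.sum_const, smul_eq_mul]
      _ ≤ ∑ l ∈ C, l.length := Finset.sum_le_sum hkl
  have : C.card * k < Nat.card V * k := lt_of_le_of_lt hsum hlt
  have hlt2 : C.card < Nat.card V := lt_of_mul_lt_mul_right this (Nat.zero_le k)
  omega
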